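/- For every group Γ and every n ≥ 1, N^n(Γ) ⊆ EH^n_b(Γ): every bounded cohomology class with vanishing Gromov seminorm lies in the kernel of the comparison map. Equivalently, if z ∈ C^n_b(Γ)^Γ is a cocycle whose class in H^n_b(Γ) has Gromov seminorm 0, then z = δφ for some (possibly unbounded) Γ-invariant cochain φ ∈ C^{n−1}(Γ)^Γ. -/

import Mathlib

set_option linter.unusedSectionVars false
set_option linter.unusedVariables false

open scoped ENNReal

namespace BddCoh

variable (G : Type*) [Group G]

/-- Homogeneous real `n`-cochains on `G`: functions `G^{n+1} → ℝ`. -/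
abbrev Cochain (n : ℕ) : Type _ := (Fin (n + 1) → G) → ℝ

variable {G}

/-- Invariance of a homogeneous cochain under the diagonal left translation action. -/
def IsInvariant {n : ℕ} (φ : Cochain G n) : Prop :=
  ∀ (g : G) (x : Fin (n + 1) → G), φ (fun i => g * x i) = φ x

/-- Boundedness of a cochain. -/
def IsBoundedC {n : ℕ} (φ : Cochain G n) : Prop :=
  ∃ C : ℝ, ∀ x, |φ x| ≤ C

/-- The sup-norm of a cochain, valued in `[0,∞]`. -/
noncomputable def snorm {n : ℕ} (φ : Cochain G n) : ℝ≥0∞ :=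
  ⨆ x : Fin (n + 1) → G, ENNReal.ofReal |φ x|

/-- The homogeneous differential. -/
noncomputable def delta {n : ℕ} : Cochain G n →ₗ[ℝ] Cochain G (n + 1) where
  toFun φ := fun x => ∑ i : Fin (n + 2), (-1 : ℝ) ^ (i : ℕ) * φ (fun j => x (i.succAbove j))
  map_add' φ ψ := by
    funext x
    simp [mul_add, Finset.sum_add_distrib]
  map_smul' c φ := by
    funext x
    simp only [Pi.smul_apply, smul_eq_mul, RingHom.id_apply]
    rw [Finset.mul_sum]
    exact Finset.sum_congr rfl fun i _ => by ring

lemma IsInvariant.add {n : ℕ} {φ ψ : Cochain G n} (h1 : IsInvariant φ) (h2 : IsInvariant ψ) :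
    IsInvariant (φ + ψ) := fun g x => by
  simp only [Pi.add_apply, h1 g x, h2 g x]

lemma IsInvariant.smul {n : ℕ} (c : ℝ) {φ : Cochain G n} (h : IsInvariant φ) :
    IsInvariant (c • φ) := fun g x => by
  simp only [Pi.smul_apply, h g x]

lemma IsInvariant.zero {n : ℕ} : IsInvariant (0 : Cochain G n) := fun _ _ => rfl

lemma IsBoundedC.add {n : ℕ} {φ ψ : Cochain G n} : IsBoundedC φ → IsBoundedC ψ →
    IsBoundedC (φ + ψ)
  | ⟨C, hC⟩, ⟨D, hD⟩ => ⟨C + D, fun x => (abs_add_le (φ x) (ψ x)).trans (add_le_add (hC x) (hD x))⟩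

lemma IsBoundedC.smul {n : ℕ} (c : ℝ) {φ : Cochain G n} : IsBoundedC φ → IsBoundedC (c • φ)
  | ⟨C, hC⟩ => ⟨|c| * C, fun x => by
      have h : |(c • φ) x| = |c| * |φ x| := by
        simp [abs_mul]
      rw [h]
      exact mul_le_mul_of_nonneg_left (hC x) (abs_nonneg c)⟩

lemma IsBoundedC.zero {n : ℕ} : IsBoundedC (0 : Cochain G n) := ⟨0, fun x => by simp⟩

variable (G)

/-- The bounded invariant cocycles in degree `n`. -/
noncomputable def Zb (n : ℕ) : Submodule ℝ (Cochain G n) where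
  carrier := {z | IsBoundedC z ∧ IsInvariant z ∧ delta z = 0}
  add_mem' := by
    rintro a b ⟨hba, hia, hda⟩ ⟨hbb, hib, hdb⟩
    exact ⟨hba.add hbb, hia.add hib, by rw [map_add, hda, hdb, add_zero]⟩
  zero_mem' := ⟨IsBoundedC.zero, IsInvariant.zero, map_zero _⟩
  smul_mem' := by
    rintro c a ⟨hb, hi, hd⟩
    exact ⟨hb.smul c, hi.smul c, by rw [map_smul, hd, smul_zero]⟩

variable {G}

/-- Being the coboundary of a bounded invariant cochain (with the convention `C^{-1} = 0`). -/
def IsCobdry : ∀ {n : ℕ}, Cochain G n → Prop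
  | 0, ψ => ψ = 0
  | n + 1, ψ => ∃ φ : Cochain G n, IsBoundedC φ ∧ IsInvariant φ ∧ delta φ = ψ

lemma IsCobdry.add : ∀ {n : ℕ} {a b : Cochain G n}, IsCobdry a → IsCobdry b → IsCobdry (a + b)
  | 0, a, b, ha, hb => by
      show a + b = 0
      rw [show a = 0 from ha, show b = 0 from hb, add_zero]
  | n + 1, a, b, ⟨φ, h1, h2, h3⟩, ⟨ψ, g1, g2, g3⟩ =>
      ⟨φ + ψ, h1.add g1, h2.add g2, by rw [map_add, h3, g3]⟩

lemma IsCobdry.smul : ∀ {n : ℕ} (c : ℝ) {a : Cochain G n}, IsCobdry a → IsCobdry (c • a)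
  | 0, c, a, ha => by
      show c • a = 0
      rw [show a = 0 from ha, smul_zero]
  | n + 1, c, a, ⟨φ, h1, h2, h3⟩ => ⟨c • φ, h1.smul c, h2.smul c, by rw [map_smul, h3]⟩

lemma IsCobdry.zero : ∀ {n : ℕ}, IsCobdry (0 : Cochain G n)
  | 0 => rfl
  | n + 1 => ⟨0, IsBoundedC.zero, IsInvariant.zero, map_zero _⟩

variable (G)

/-- The coboundaries, as a submodule of the cocycles. -/
noncomputable def Bb (n : ℕ) : Submodule ℝ (Zb G n) where
  carrier := {z | IsCobdry (z : Cochain G n)}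
  add_mem' := by
    intro a b ha hb
    show IsCobdry ((a + b : Zb G n) : Cochain G n)
    rw [Submodule.coe_add]
    exact ha.add hb
  zero_mem' := by
    show IsCobdry ((0 : Zb G n) : Cochain G n)
    rw [ZeroMemClass.coe_zero]
    exact IsCobdry.zero
  smul_mem' := by
    intro c a ha
    show IsCobdry ((c • a : Zb G n) : Cochain G n)
    rw [Submodule.coe_smul]
    exact ha.smul c

/-- Bounded cohomology of `G` in degree `n` (with trivial real coefficients), computed from
the complex of bounded invariant homogeneous cochains. -/
abbrev Hb (n : ℕ) := Zb G n ⧸ Bb G n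

variable {G}

/-- The bounded cohomology class of a bounded invariant cocycle. -/
noncomputable abbrev mkH {n : ℕ} (z : Zb G n) : Hb G n := (Bb G n).mkQ z

lemma mkH_zero {n : ℕ} : mkH (0 : Zb G n) = 0 := map_zero (Bb G n).mkQ

lemma mkH_add {n : ℕ} (y z : Zb G n) : mkH (y + z) = mkH y + mkH z := map_add (Bb G n).mkQ y z

lemma mkH_smul {n : ℕ} (c : ℝ) (z : Zb G n) : mkH (c • z) = c • mkH z :=
  map_smul (Bb G n).mkQ c z

/-- The Gromov seminorm (canonical `ℓ^∞`-seminorm) on bounded cohomology, in `[0,∞]`. -/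
noncomputable def gnorm {n : ℕ} (α : Hb G n) : ℝ≥0∞ :=
  sInf {r | ∃ z : Zb G n, mkH z = α ∧ snorm (z : Cochain G n) = r}

lemma snorm_zero {n : ℕ} : snorm (0 : Cochain G n) = 0 :=
  le_antisymm (iSup_le fun x => by simp) zero_le

lemma snorm_add_le {n : ℕ} (φ ψ : Cochain G n) : snorm (φ + ψ) ≤ snorm φ + snorm ψ := by
  refine iSup_le fun x => ?_
  calc ENNReal.ofReal |(φ + ψ) x| ≤ ENNReal.ofReal (|φ x| + |ψ x|) :=
        ENNReal.ofReal_le_ofReal (abs_add_le (φ x) (ψ x))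
    _ = ENNReal.ofReal |φ x| + ENNReal.ofReal |ψ x| :=
        ENNReal.ofReal_add (abs_nonneg _) (abs_nonneg _)
    _ ≤ snorm φ + snorm ψ :=
        add_le_add (le_iSup (fun x => ENNReal.ofReal |φ x|) x)
          (le_iSup (fun x => ENNReal.ofReal |ψ x|) x)

lemma snorm_smul_le {n : ℕ} (c : ℝ) (φ : Cochain G n) :
    snorm (c • φ) ≤ ENNReal.ofReal |c| * snorm φ := by
  refine iSup_le fun x => ?_
  have h : |(c • φ) x| = |c| * |φ x| := by simp [abs_mul]
  rw [h, ENNReal.ofReal_mul (abs_nonneg c)]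
  exact mul_le_mul_right (le_iSup (fun x => ENNReal.ofReal |φ x|) x) _

lemma gnorm_le_snorm {n : ℕ} (z : Zb G n) : gnorm (mkH z) ≤ snorm (z : Cochain G n) :=
  sInf_le ⟨z, rfl, rfl⟩

lemma gnorm_zero {n : ℕ} : gnorm (0 : Hb G n) = 0 := by
  refine le_antisymm ?_ zero_le
  have h := gnorm_le_snorm (0 : Zb G n)
  rw [mkH_zero] at h
  simpa [snorm_zero] using h

lemma exists_gnorm_rep {n : ℕ} {α : Hb G n} (h : gnorm α = 0) {ε : ℝ≥0∞} (hε : 0 < ε) :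
    ∃ z : Zb G n, mkH z = α ∧ snorm (z : Cochain G n) < ε := by
  have h2 : gnorm α < ε := by rw [h]; exact hε
  rw [gnorm] at h2
  obtain ⟨r, ⟨z, hz, hr⟩, hlt⟩ := sInf_lt_iff.mp h2
  exact ⟨z, hz, hr ▸ hlt⟩

variable (G)

/-- The subspace of classes with vanishing Gromov seminorm. -/
noncomputable def NG (n : ℕ) : Submodule ℝ (Hb G n) where
  carrier := {α | gnorm α = 0}
  zero_mem' := gnorm_zero
  add_mem' := by
    intro a b ha hb
    show gnorm (a + b) = 0
    refine le_antisymm ?_ zero_le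
    refine ENNReal.le_of_forall_pos_le_add fun ε hε _ => ?_
    have hε2 : (0 : ℝ≥0∞) < (ε : ℝ≥0∞) / 2 :=
      ENNReal.half_pos (by exact_mod_cast hε.ne')
    obtain ⟨z₁, h₁, s₁⟩ := exists_gnorm_rep ha hε2
    obtain ⟨z₂, h₂, s₂⟩ := exists_gnorm_rep hb hε2
    have hmk : mkH (z₁ + z₂) = a + b := by rw [mkH_add, h₁, h₂]
    calc gnorm (a + b) ≤ snorm ((z₁ + z₂ : Zb G n) : Cochain G n) := hmk ▸ gnorm_le_snorm _
      _ = snorm ((z₁ : Cochain G n) + (z₂ : Cochain G n)) := by rw [Submodule.coe_add]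
      _ ≤ snorm (z₁ : Cochain G n) + snorm (z₂ : Cochain G n) := snorm_add_le _ _
      _ ≤ (ε : ℝ≥0∞) / 2 + (ε : ℝ≥0∞) / 2 := add_le_add s₁.le s₂.le
      _ = (ε : ℝ≥0∞) := ENNReal.add_halves _
      _ ≤ 0 + ε := by rw [zero_add]
  smul_mem' := by
    intro c a ha
    show gnorm (c • a) = 0
    by_cases hc : c = 0
    · subst hc
      rw [zero_smul]
      exact gnorm_zero
    refine le_antisymm ?_ zero_le
    refine ENNReal.le_of_forall_pos_le_add fun ε hε _ => ?_
    have hM0 : ENNReal.ofReal |c| ≠ 0 := by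
      rw [Ne, ENNReal.ofReal_eq_zero, not_le]
      exact abs_pos.mpr hc
    have hMt : ENNReal.ofReal |c| ≠ ⊤ := ENNReal.ofReal_ne_top
    have hδ : (0 : ℝ≥0∞) < (ε : ℝ≥0∞) / ENNReal.ofReal |c| :=
      ENNReal.div_pos (by exact_mod_cast hε.ne') hMt
    obtain ⟨z, hz, hs⟩ := exists_gnorm_rep ha hδ
    have hmk : mkH (c • z) = c • a := by rw [mkH_smul, hz]
    calc gnorm (c • a) ≤ snorm ((c • z : Zb G n) : Cochain G n) := hmk ▸ gnorm_le_snorm _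
      _ = snorm (c • (z : Cochain G n)) := by rw [Submodule.coe_smul]
      _ ≤ ENNReal.ofReal |c| * snorm (z : Cochain G n) := snorm_smul_le c _
      _ ≤ ENNReal.ofReal |c| * ((ε : ℝ≥0∞) / ENNReal.ofReal |c|) := mul_le_mul_right hs.le _
      _ = (ε : ℝ≥0∞) := ENNReal.mul_div_cancel hM0 hMt
      _ ≤ 0 + ε := by rw [zero_add]

variable {G}

/-- Having an invariant (possibly unbounded) primitive (with the convention `C^{-1} = 0`). -/
def HasInvPrimitive : ∀ {n : ℕ}, Cochain G n → Prop
  | 0, ψ => ψ = 0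
  | n + 1, ψ => ∃ φ : Cochain G n, IsInvariant φ ∧ delta φ = ψ

/-- A bounded cohomology class is exact if it lies in the kernel of the comparison map, i.e. if
it is represented by the coboundary of an invariant (possibly unbounded) cochain. -/
def IsExact {n : ℕ} (α : Hb G n) : Prop :=
  ∃ z : Zb G n, mkH z = α ∧ HasInvPrimitive (z : Cochain G n)

/-- Values `‖δφ‖_∞` over invariant primitives `φ` of representatives of `α` vanishing on
`S^{n}` (with the convention `C^{-1} = 0` in degree `0`). -/
def bahSet : ∀ {n : ℕ}, Set G → Hb G n → Set ℝ≥0∞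
  | 0, _, α => {r | α = 0 ∧ r = 0}
  | n + 1, S, α =>
      {r | ∃ φ : Cochain G n, IsInvariant φ ∧
        (∀ x : Fin (n + 1) → G, (∀ i, x i ∈ S) → φ x = 0) ∧
        (∃ z : Zb G (n + 1), (z : Cochain G (n + 1)) = delta φ ∧ mkH z = α) ∧
        snorm (delta φ) = r}

/-- The seminorm `‖α‖_S`. -/
noncomputable def normS {n : ℕ} (S : Set G) (α : Hb G n) : ℝ≥0∞ :=
  sInf (bahSet S α)

/-- The seminorm `‖α‖_bah = sup_S ‖α‖_S`, the supremum running over all finite `S ⊆ G`. -/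
noncomputable def bah {n : ℕ} (α : Hb G n) : ℝ≥0∞ :=
  ⨆ S : Finset G, normS (S : Set G) α

lemma normS_le {n : ℕ} {S : Set G} {α : Hb G (n + 1)} {φ : Cochain G n}
    (h1 : IsInvariant φ) (h2 : ∀ x : Fin (n + 1) → G, (∀ i, x i ∈ S) → φ x = 0)
    (h3 : ∃ z : Zb G (n + 1), (z : Cochain G (n + 1)) = delta φ ∧ mkH z = α) :
    normS S α ≤ snorm (delta φ) :=
  sInf_le ⟨φ, h1, h2, h3, rfl⟩

lemma normS_le_bah {n : ℕ} (S : Finset G) (α : Hb G n) : normS (S : Set G) α ≤ bah α :=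
  le_iSup (fun S : Finset G => normS (S : Set G) α) S

lemma bah_zero : ∀ {n : ℕ}, bah (0 : Hb G n) = 0 := by
  intro n
  refine le_antisymm (iSup_le fun S => ?_) zero_le
  cases n with
  | zero =>
      refine le_trans (sInf_le ?_) le_rfl
      exact ⟨rfl, rfl⟩
  | succ n =>
      have h := normS_le (α := (0 : Hb G (n + 1))) (S := (S : Set G))
        (φ := (0 : Cochain G n)) IsInvariant.zero (fun x _ => rfl)
        ⟨0, by rw [ZeroMemClass.coe_zero, map_zero], map_zero _⟩
      rw [map_zero, snorm_zero] at h
      exact h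

lemma eq_zero_of_bah_zero₀ {α : Hb G 0} (h : bah α = 0) : α = 0 := by
  by_contra hα
  have hS : normS ((∅ : Finset G) : Set G) α = ⊤ := by
    rw [normS]
    suffices hE : bahSet ((∅ : Finset G) : Set G) α = ∅ by rw [hE, sInf_empty]
    ext r
    simp only [bahSet, Set.mem_setOf_eq, Set.mem_empty_iff_false, iff_false, not_and]
    intro h0
    exact absurd h0 hα
  have := normS_le_bah (∅ : Finset G) α
  rw [hS, h] at this
  exact absurd (top_le_iff.mp this).symm (by simp)

lemma normS_eq_zero_of_bah {n : ℕ} {α : Hb G n} (h : bah α = 0) (S : Finset G) :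
    normS (S : Set G) α = 0 :=
  le_antisymm (h ▸ normS_le_bah S α) zero_le

lemma exists_bah_rep {n : ℕ} {α : Hb G (n + 1)} (h : bah α = 0) (S : Finset G)
    {ε : ℝ≥0∞} (hε : 0 < ε) :
    ∃ φ : Cochain G n, IsInvariant φ ∧
      (∀ x : Fin (n + 1) → G, (∀ i, x i ∈ (S : Set G)) → φ x = 0) ∧
      (∃ z : Zb G (n + 1), (z : Cochain G (n + 1)) = delta φ ∧ mkH z = α) ∧
      snorm (delta φ) < ε := by
  have h2 : normS ((S : Set G)) α < ε := by
    rw [normS_eq_zero_of_bah h S]; exact hε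
  rw [normS] at h2
  obtain ⟨r, hr, hlt⟩ := sInf_lt_iff.mp h2
  obtain ⟨φ, h1, h2', h3, h4⟩ := hr
  exact ⟨φ, h1, h2', h3, h4 ▸ hlt⟩

variable (G)

/-- The subspace `N^n_0` of exact classes with vanishing `‖·‖_bah`-seminorm. -/
noncomputable def N0 (n : ℕ) : Submodule ℝ (Hb G n) where
  carrier := {α | bah α = 0}
  zero_mem' := bah_zero
  add_mem' := by
    intro a b ha hb
    show bah (a + b) = 0
    cases n with
    | zero =>
        rw [eq_zero_of_bah_zero₀ ha, eq_zero_of_bah_zero₀ hb, add_zero]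
        exact bah_zero
    | succ n =>
        refine le_antisymm (iSup_le fun S => ?_) zero_le
        refine ENNReal.le_of_forall_pos_le_add fun ε hε _ => ?_
        have hε2 : (0 : ℝ≥0∞) < (ε : ℝ≥0∞) / 2 :=
          ENNReal.half_pos (by exact_mod_cast hε.ne')
        obtain ⟨φ₁, i₁, v₁, ⟨z₁, hz₁, hm₁⟩, s₁⟩ := exists_bah_rep ha S hε2
        obtain ⟨φ₂, i₂, v₂, ⟨z₂, hz₂, hm₂⟩, s₂⟩ := exists_bah_rep hb S hε2
        have hsum : normS (S : Set G) (a + b) ≤ snorm (delta (φ₁ + φ₂)) := by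
          refine normS_le (i₁.add i₂) (fun x hx => ?_) ⟨z₁ + z₂, ?_, ?_⟩
          · simp only [Pi.add_apply, v₁ x hx, v₂ x hx, add_zero]
          · rw [Submodule.coe_add, hz₁, hz₂, map_add]
          · rw [mkH_add, hm₁, hm₂]
        refine hsum.trans ?_
        calc snorm (delta (φ₁ + φ₂)) = snorm (delta φ₁ + delta φ₂) := by rw [map_add]
          _ ≤ snorm (delta φ₁) + snorm (delta φ₂) := snorm_add_le _ _
          _ ≤ (ε : ℝ≥0∞) / 2 + (ε : ℝ≥0∞) / 2 := add_le_add s₁.le s₂.le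
          _ = (ε : ℝ≥0∞) := ENNReal.add_halves _
          _ ≤ 0 + ε := by rw [zero_add]
  smul_mem' := by
    intro c a ha
    show bah (c • a) = 0
    by_cases hc : c = 0
    · subst hc
      rw [zero_smul]
      exact bah_zero
    cases n with
    | zero =>
        rw [eq_zero_of_bah_zero₀ ha, smul_zero]
        exact bah_zero
    | succ n =>
        refine le_antisymm (iSup_le fun S => ?_) zero_le
        refine ENNReal.le_of_forall_pos_le_add fun ε hε _ => ?_
        have hM0 : ENNReal.ofReal |c| ≠ 0 := by
          rw [Ne, ENNReal.ofReal_eq_zero, not_le]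
          exact abs_pos.mpr hc
        have hMt : ENNReal.ofReal |c| ≠ ⊤ := ENNReal.ofReal_ne_top
        have hδ : (0 : ℝ≥0∞) < (ε : ℝ≥0∞) / ENNReal.ofReal |c| :=
          ENNReal.div_pos (by exact_mod_cast hε.ne') hMt
        obtain ⟨φ, hi, hv, ⟨z, hz, hm⟩, hs⟩ := exists_bah_rep ha S hδ
        have hle : normS (S : Set G) (c • a) ≤ snorm (delta (c • φ)) := by
          refine normS_le (hi.smul c) (fun x hx => ?_) ⟨c • z, ?_, ?_⟩
          · simp only [Pi.smul_apply, hv x hx, smul_zero]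
          · rw [Submodule.coe_smul, hz, map_smul]
          · rw [mkH_smul, hm]
        refine hle.trans ?_
        calc snorm (delta (c • φ)) = snorm (c • delta φ) := by rw [map_smul]
          _ ≤ ENNReal.ofReal |c| * snorm (delta φ) := snorm_smul_le c _
          _ ≤ ENNReal.ofReal |c| * ((ε : ℝ≥0∞) / ENNReal.ofReal |c|) :=
              mul_le_mul_right hs.le _
          _ = (ε : ℝ≥0∞) := ENNReal.mul_div_cancel hM0 hMt
          _ ≤ 0 + ε := by rw [zero_add]


end BddCoh

open BddCoh

section Aux

open BddCoh Finsupp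

/-- A row-finite linear system over `ℝ` is solvable as soon as every linear relation among
the rows is matched by the right-hand sides. -/
lemma exists_solution {ι κ : Type*} (a : ι → (κ →₀ ℝ)) (b : ι → ℝ)
    (h : ∀ c : ι →₀ ℝ, Finsupp.linearCombination ℝ a c = 0 →
      Finsupp.linearCombination ℝ b c = 0) :
    ∃ f : κ → ℝ, ∀ x, Finsupp.linearCombination ℝ f (a x) = b x := by
  set A := Finsupp.linearCombination ℝ a with hA
  set B := Finsupp.linearCombination ℝ b with hB
  have hker : LinearMap.ker A ≤ LinearMap.ker B := fun c hc => h c hc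
  let e := A.quotKerEquivRange
  let Bq : ((ι →₀ ℝ) ⧸ LinearMap.ker A) →ₗ[ℝ] ℝ := Submodule.liftQ _ B hker
  let B' : LinearMap.range A →ₗ[ℝ] ℝ := Bq ∘ₗ (e.symm : _ →ₗ[ℝ] _)
  obtain ⟨g, hg⟩ := B'.exists_extend
  refine ⟨fun u => g (Finsupp.single u 1), fun x => ?_⟩
  have key : ∀ d : κ →₀ ℝ,
      Finsupp.linearCombination ℝ (fun u => g (Finsupp.single u 1)) d = g d := by
    intro d
    have h1 : Finsupp.linearCombination ℝ (fun u => Finsupp.single u (1:ℝ)) d = d := by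
      rw [Finsupp.linearCombination_apply]
      have : (d.sum fun u r => r • Finsupp.single u (1:ℝ)) = d.sum Finsupp.single := by
        apply Finsupp.sum_congr
        intro u _; rw [Finsupp.smul_single', mul_one]
      rw [this, d.sum_single]
    calc Finsupp.linearCombination ℝ (fun u => g (Finsupp.single u 1)) d
        = Finsupp.linearCombination ℝ (⇑g ∘ fun u => Finsupp.single u (1:ℝ)) d := rfl
      _ = g (Finsupp.linearCombination ℝ (fun u => Finsupp.single u (1:ℝ)) d) :=
          (Finsupp.apply_linearCombination ℝ g _ d).symm
      _ = g d := by rw [h1]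
  rw [key (a x)]
  have hax : a x = A (Finsupp.single x 1) := by
    rw [hA, Finsupp.linearCombination_single, one_smul]
  have hmem : a x ∈ LinearMap.range A := ⟨Finsupp.single x 1, hax.symm⟩
  have hg1 : g (a x) = B' ⟨a x, hmem⟩ := by
    have := congrArg (fun φ => φ ⟨a x, hmem⟩) hg
    simpa using this
  rw [hg1]
  have he : e (Submodule.Quotient.mk (Finsupp.single x 1)) = ⟨a x, hmem⟩ := by
    apply Subtype.ext
    rw [LinearMap.quotKerEquivRange_apply_mk]
    exact hax.symm
  have hB' : B' ⟨a x, hmem⟩ = Bq (Submodule.Quotient.mk (Finsupp.single x 1)) := by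
    show Bq (e.symm ⟨a x, hmem⟩) = _
    rw [← he, LinearEquiv.symm_apply_apply]
  rw [hB']
  show B (Finsupp.single x 1) = b x
  rw [hB, Finsupp.linearCombination_single, smul_eq_mul, one_mul]

variable {G : Type*} [Group G] {m : ℕ}

/-- Inhomogeneous coordinates of a homogeneous tuple. -/
def inh (x : Fin (m + 1) → G) : Fin m → G := fun j => (x j.castSucc)⁻¹ * x j.succ

lemma inh_smul (g : G) (x : Fin (m + 1) → G) : inh (fun i => g * x i) = inh x := by
  funext j; simp [inh, mul_assoc]

/-- Partial products. -/
def cumN (u : Fin m → G) : ℕ → G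
  | 0 => 1
  | k + 1 => cumN u k * (if h : k < m then u ⟨k, h⟩ else 1)

lemma cumN_inh (x : Fin (m + 1) → G) (k : ℕ) (hk : k ≤ m) :
    cumN (inh x) k = (x 0)⁻¹ * x ⟨k, Nat.lt_succ_of_le hk⟩ := by
  induction k with
  | zero => simp [cumN]
  | succ k ih =>
      have hk' : k < m := hk
      rw [cumN, ih (Nat.le_of_lt hk'), dif_pos hk']
      show (x 0)⁻¹ * x _ * ((x (Fin.castSucc ⟨k, hk'⟩))⁻¹ * x (Fin.succ ⟨k, hk'⟩)) = _
      rw [Fin.castSucc_mk, Fin.succ_mk]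
      group

/-- The invariant cochain associated to a function on inhomogeneous coordinates. -/
def toInv (f : (Fin m → G) → ℝ) : Cochain G m := fun x => f (inh x)

lemma toInv_isInvariant (f : (Fin m → G) → ℝ) : IsInvariant (toInv f) := by
  intro g x; unfold toInv; rw [inh_smul]

lemma toInv_eq {ψ : Cochain G m} (hψ : IsInvariant ψ) :
    toInv (fun u => ψ (fun i => cumN u i)) = ψ := by
  funext x
  show ψ (fun i => cumN (inh x) i) = ψ x
  have hfun : (fun i : Fin (m+1) => cumN (inh x) (i : ℕ)) = fun i => (x 0)⁻¹ * x i := by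
    funext i
    rw [cumN_inh x i (Nat.lt_succ_iff.mp i.isLt)]
  rw [hfun, hψ ((x 0)⁻¹) x]

/-- The row of the linear system indexed by a homogeneous tuple. -/
noncomputable def row (x : Fin (m + 2) → G) : (Fin m → G) →₀ ℝ :=
  ∑ i : Fin (m + 2), Finsupp.single (inh (fun j => x (i.succAbove j))) ((-1 : ℝ) ^ (i : ℕ))

lemma lc_row (f : (Fin m → G) → ℝ) (x : Fin (m + 2) → G) :
    Finsupp.linearCombination ℝ f (row x) = delta (toInv f) x := by
  rw [row, map_sum]
  show _ = ∑ i : Fin (m + 2), (-1 : ℝ) ^ (i : ℕ) * toInv f (fun j => x (i.succAbove j))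
  refine Finset.sum_congr rfl fun i _ => ?_
  rw [Finsupp.linearCombination_single, smul_eq_mul]
  rfl

lemma delta_inv_lc (c : (Fin (m + 2) → G) →₀ ℝ)
    (hc : Finsupp.linearCombination ℝ row c = 0)
    {ψ : Cochain G m} (hψ : IsInvariant ψ) :
    Finsupp.linearCombination ℝ (fun x => delta ψ x) c = 0 := by
  set f : (Fin m → G) → ℝ := fun u => ψ (fun i => cumN u i) with hf
  have h1 : (fun x : Fin (m + 2) → G => delta ψ x) =
      ⇑(Finsupp.linearCombination ℝ f) ∘ row := by
    funext x
    show delta ψ x = Finsupp.linearCombination ℝ f (row x)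
    rw [lc_row, hf, toInv_eq hψ]
  rw [h1, ← Finsupp.apply_linearCombination ℝ (Finsupp.linearCombination ℝ f) row c, hc,
    map_zero]

end Aux


/-- In every degree `n ≥ 1`, classes of vanishing Gromov seminorm are exact: they lie in the
kernel of the comparison map.  Equivalently, any bounded invariant cocycle `z` whose class has
vanishing Gromov seminorm is the coboundary of a (possibly unbounded) invariant cochain. -/
theorem NGromov_subset_exact (Γ : Type*) [Group Γ] (n : ℕ) (hn : 1 ≤ n) :
    (∀ α : Hb Γ n, gnorm α = 0 → IsExact α) ∧
      (∀ z : Zb Γ n, gnorm (mkH z) = 0 → HasInvPrimitive (z : Cochain Γ n)) := by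
  obtain ⟨m, rfl⟩ : ∃ m, n = m + 1 := ⟨n - 1, (Nat.succ_pred_eq_of_pos hn).symm⟩
  have main : ∀ z : Zb Γ (m + 1), gnorm (mkH z) = 0 →
      HasInvPrimitive (z : Cochain Γ (m + 1)) := by
    intro z hz
    have hyp : ∀ c : (Fin (m + 2) → Γ) →₀ ℝ, Finsupp.linearCombination ℝ row c = 0 →
        Finsupp.linearCombination ℝ (fun x => (z : Cochain Γ (m + 1)) x) c = 0 := ?_
    case _ =>
      obtain ⟨f, hf⟩ := exists_solution row (fun x => (z : Cochain Γ (m + 1)) x) hyp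
      exact ⟨toInv f, toInv_isInvariant f, by funext x; rw [← lc_row, hf]⟩
    intro c hc
    set S := Finsupp.linearCombination ℝ (fun x => (z : Cochain Γ (m + 1)) x) c with hS
    set C := c.support.sum fun x => |c x| with hC
    have hC0 : 0 ≤ C := Finset.sum_nonneg fun x _ => abs_nonneg _
    have key : ∀ ε : ℝ, 0 < ε → |S| ≤ C * ε := by
      intro ε hε
      obtain ⟨z', hz', hs⟩ := exists_gnorm_rep hz (ε := ENNReal.ofReal ε)
        (ENNReal.ofReal_pos.mpr hε)
      have hmem : z' - z ∈ Bb Γ (m + 1) := by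
        have : Submodule.Quotient.mk z' = Submodule.Quotient.mk (p := Bb Γ (m + 1)) z := hz'
        exact (Submodule.Quotient.eq _).mp this
      have hcob : IsCobdry ((z' - z : Zb Γ (m + 1)) : Cochain Γ (m + 1)) := hmem
      obtain ⟨ψ, hbd, hinvψ, hdψ⟩ := hcob
      have hzeq : ∀ x, (z : Cochain Γ (m + 1)) x = (z' : Cochain Γ (m + 1)) x - delta ψ x := by
        intro x
        have h1 := congrFun hdψ x
        rw [Submodule.coe_sub] at h1
        have h2 : ((z' : Cochain Γ (m + 1)) - (z : Cochain Γ (m + 1))) x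
            = (z' : Cochain Γ (m + 1)) x - (z : Cochain Γ (m + 1)) x := rfl
        rw [h2] at h1
        linarith [h1]
      have hsplit : S = Finsupp.linearCombination ℝ (fun x => (z' : Cochain Γ (m + 1)) x) c := by
        rw [hS, Finsupp.linearCombination_apply, Finsupp.linearCombination_apply]
        have hd0 : Finsupp.linearCombination ℝ (fun x => delta ψ x) c = 0 :=
          delta_inv_lc c hc hinvψ
        rw [Finsupp.linearCombination_apply] at hd0
        have : (c.sum fun x r => r • (z : Cochain Γ (m + 1)) x)
            = (c.sum fun x r => r • (z' : Cochain Γ (m + 1)) x)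
              - (c.sum fun x r => r • delta ψ x) := by
          rw [← Finsupp.sum_sub]
          apply Finsupp.sum_congr
          intro x _
          rw [hzeq x]
          simp [smul_eq_mul]
          ring
        rw [this, hd0, sub_zero]
      have hbound : ∀ x, |(z' : Cochain Γ (m + 1)) x| ≤ ε := by
        intro x
        have h1 : ENNReal.ofReal |(z' : Cochain Γ (m + 1)) x| ≤ snorm (z' : Cochain Γ (m + 1)) :=
          le_iSup (fun x => ENNReal.ofReal |(z' : Cochain Γ (m + 1)) x|) x
        have h2 : ENNReal.ofReal |(z' : Cochain Γ (m + 1)) x| < ENNReal.ofReal ε :=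
          lt_of_le_of_lt h1 hs
        exact le_of_lt ((ENNReal.ofReal_lt_ofReal_iff hε).mp h2)
      rw [hsplit, Finsupp.linearCombination_apply, Finsupp.sum]
      calc |∑ x ∈ c.support, c x • (z' : Cochain Γ (m + 1)) x|
          ≤ ∑ x ∈ c.support, |c x • (z' : Cochain Γ (m + 1)) x| :=
            Finset.abs_sum_le_sum_abs _ _
        _ ≤ ∑ x ∈ c.support, |c x| * ε := by
            refine Finset.sum_le_sum fun x _ => ?_
            rw [smul_eq_mul, abs_mul]
            exact mul_le_mul_of_nonneg_left (hbound x) (abs_nonneg _)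
        _ = C * ε := by rw [← Finset.sum_mul, hC]
    by_contra hne
    have habs : 0 < |S| := abs_pos.mpr hne
    have h1 := key (|S| / (C + 1)) (by positivity)
    have hq : 0 < |S| / (C + 1) := by positivity
    have h2 : C * (|S| / (C + 1)) < (C + 1) * (|S| / (C + 1)) :=
      mul_lt_mul_of_pos_right (lt_add_one C) hq
    have h3 : (C + 1) * (|S| / (C + 1)) = |S| := by field_simp
    linarith
  refine ⟨?_, main⟩
  intro α hα
  obtain ⟨z, rfl⟩ := Submodule.mkQ_surjective (Bb Γ (m + 1)) α
  exact ⟨z, rfl, main z hα⟩
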